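/- Let α > 0, x_0 ∈ [0,π], l ∈ (0,π), and suppose x_0(1−l·c_α) < π−l. Set a_m = x_0(1−l·c_α) and define F(a) = u_{χ_{[a−l,a+l]}}(x_0) for a ∈ [−π+l, π−l]. Then F is increasing on [−π+l, a_m] and decreasing on [a_m, π−l]; consequently F attains its minimum over [−π+l,π−l] at a = −π+l, where F(−π+l) = l·(((π−l)c_α − 1)x_0 + 1/c_α + l − π) if x_0 > −π+2l and F(−π+l) = −x_0²/2 − (π−l)(1−l·c_α)x_0 − l² + l(1/c_α + π) − π²/2 if x_0 ≤ −π+2l, and it attains its maximum at a = a_m, where F(a_m) = (l/c_α)(1 − l·c_α/2)(1 − x_0²c_α²). -/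

import Mathlib

set_option maxHeartbeats 800000


open MeasureTheory Real Set Filter Topology

noncomputable def cA (α : ℝ) : ℝ := α / (1 + α * π)

noncomputable def robinG (α x y : ℝ) : ℝ :=
  -(1/2) * cA α * x * y - (1/2) * |x - y| + 1 / (2 * cA α)

/-- Solution of the Robin problem with heat source `f`. -/
noncomputable def robinSol (α : ℝ) (f : ℝ → ℝ) (x : ℝ) : ℝ :=
  ∫ y in (-π)..π, robinG α x y * f y

/-- The class 𝔉(m,M,s) of heat sources. -/
def memF (m M s : ℝ) (f : ℝ → ℝ) : Prop :=
  MeasureTheory.IntegrableOn f (Set.Icc (-π) π) MeasureTheory.volume ∧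
  (∀ᵐ x ∂(MeasureTheory.volume.restrict (Set.Icc (-π) π)), m ≤ f x ∧ f x ≤ M) ∧
  (∫ x in (-π)..π, f x) = 2 * π * s

/-- Temperature gap (oscillation) over `[-π, π]`. -/
noncomputable def osc (u : ℝ → ℝ) : ℝ :=
  sSup (u '' Set.Icc (-π) π) - sInf (u '' Set.Icc (-π) π)

lemma hasDerivAt_mul_abs (y : ℝ) : HasDerivAt (fun t : ℝ => t * |t|) (2 * |y|) y := by
  rcases lt_trichotomy y 0 with hy | hy | hy
  · have h : HasDerivAt (fun t : ℝ => -(t * t)) (2 * |y|) y := by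
      have h2 : HasDerivAt (fun t : ℝ => -(t * t)) (-(1 * y + y * 1)) y := ((hasDerivAt_id' y).mul (hasDerivAt_id' y)).neg
      convert h2 using 1
      rw [abs_of_neg hy]; ring
    refine h.congr_of_eventuallyEq ?_
    filter_upwards [Iio_mem_nhds hy] with t ht
    rw [abs_of_neg ht]; ring
  · subst hy
    rw [hasDerivAt_iff_tendsto_slope]
    have hs : (fun t : ℝ => |t|) =ᶠ[𝓝[≠] (0:ℝ)] slope (fun t : ℝ => t * |t|) 0 := by
      filter_upwards [self_mem_nhdsWithin] with t ht
      simp only [slope_def_field, Set.mem_compl_iff, Set.mem_singleton_iff] at *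
      field_simp
      simp
    have := (continuous_abs.tendsto' (0:ℝ) 0 (by simp)).mono_left (nhdsWithin_le_nhds (s := {(0:ℝ)}ᶜ))
    simpa using this.congr' hs
  · have h : HasDerivAt (fun t : ℝ => t * t) (2 * |y|) y := by
      have h2 : HasDerivAt (fun t : ℝ => t * t) (1 * y + y * 1) y := (hasDerivAt_id' y).mul (hasDerivAt_id' y)
      convert h2 using 1
      rw [abs_of_pos hy]; ring
    refine h.congr_of_eventuallyEq ?_
    filter_upwards [Ioi_mem_nhds hy] with t ht
    rw [abs_of_pos ht]

lemma robinSol_indicator (α x0 l a : ℝ) (hα : 0 < α) (hal : -π ≤ a - l) (har : a + l ≤ π)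
    (hl : 0 < l) :
    robinSol α ((Set.Icc (a - l) (a + l)).indicator (fun _ => (1:ℝ))) x0
      = -(cA α * x0 * l * a) - 1/4*((a+l-x0)*|a+l-x0|) + 1/4*((a-l-x0)*|a-l-x0|) + l / cA α := by
  have hπ := pi_pos
  have hc : 0 < cA α := div_pos hα (by positivity)
  have hGcont : Continuous (robinG α x0) := by
    unfold robinG; fun_prop
  have hΦ : ∀ y : ℝ, HasDerivAt
      (fun t : ℝ => t*(1/(2*cA α)) - 1/4*cA α*x0*(t*t) - 1/4*((t-x0)*|t-x0|))
      (robinG α x0 y) y := by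
    intro y
    have h1 : HasDerivAt (fun t : ℝ => (t - x0)*|t - x0|) (2 * |y - x0| * 1) y :=
      by have := (hasDerivAt_mul_abs (y-x0)).comp y ((hasDerivAt_id' y).sub_const x0); exact this
    have h2 : HasDerivAt (fun t : ℝ => t*t) (1*y + y*1) y :=
      (hasDerivAt_id y).mul (hasDerivAt_id y)
    have comb : HasDerivAt
        (fun t : ℝ => t*(1/(2*cA α)) - 1/4*cA α*x0*(t*t) - 1/4*((t-x0)*|t-x0|))
        (1*(1/(2*cA α)) - 1/4*cA α*x0*(1*y+y*1) - 1/4*(2 * |y - x0| * 1)) y :=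
      (((hasDerivAt_id y).mul_const (1/(2*cA α))).sub (h2.const_mul (1/4*cA α*x0))).sub
        (h1.const_mul (1/4))
    have hD : 1*(1/(2*cA α)) - 1/4*cA α*x0*(1*y+y*1) - 1/4*(2 * |y - x0| * 1) = robinG α x0 y := by
      unfold robinG; rw [abs_sub_comm x0 y]; ring
    exact hD ▸ comb
  have step1 : robinSol α ((Set.Icc (a - l) (a + l)).indicator (fun _ => (1:ℝ))) x0
      = ∫ y in (-π)..π, (Set.Icc (a-l) (a+l)).indicator (robinG α x0) y := by
    unfold robinSol
    congr 1
    funext y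
    by_cases hy : y ∈ Set.Icc (a-l) (a+l) <;> simp [hy]
  have hseteq : (Ioc (-π) π ∩ Icc (a-l) (a+l) : Set ℝ) =ᵐ[volume] (Ioc (a-l) (a+l) : Set ℝ) := by
    have h1 : (Icc (a-l) (a+l) : Set ℝ) =ᵐ[volume] Ioc (a-l) (a+l) := Ioc_ae_eq_Icc.symm
    exact (ae_eq_set_inter (by rfl) h1).trans
      (by rw [inter_eq_self_of_subset_right (Ioc_subset_Ioc hal har)]; exact EventuallyEq.rfl)
  have step2 : (∫ y in (-π)..π, (Set.Icc (a-l) (a+l)).indicator (robinG α x0) y)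
      = ∫ y in (a-l)..(a+l), robinG α x0 y := by
    rw [intervalIntegral.integral_of_le (by linarith), setIntegral_indicator measurableSet_Icc,
      setIntegral_congr_set hseteq, ← intervalIntegral.integral_of_le (by linarith)]
  have step3 : (∫ y in (a-l)..(a+l), robinG α x0 y)
      = ((a+l)*(1/(2*cA α)) - 1/4*cA α*x0*((a+l)*(a+l)) - 1/4*((a+l-x0)*|a+l-x0|))
        - ((a-l)*(1/(2*cA α)) - 1/4*cA α*x0*((a-l)*(a-l)) - 1/4*((a-l-x0)*|a-l-x0|)) := by
    exact intervalIntegral.integral_eq_sub_of_hasDerivAt (fun t _ => hΦ t)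
      (hGcont.intervalIntegrable _ _)
  rw [step1, step2, step3]
  field_simp
  ring

/-- Lemma 1, case `α > α_m`: behavior of `F(a) = u_{χ_{I(a,l)}}(x₀)`. -/
theorem lemma1_sup_alpha (α x0 l : ℝ) (hα : 0 < α) (hx0 : x0 ∈ Set.Icc 0 π)
    (hl : l ∈ Set.Ioo 0 π) (hcond : x0 * (1 - l * cA α) < π - l)
    (am : ℝ) (ham : am = x0 * (1 - l * cA α))
    (F : ℝ → ℝ)
    (hF : F = fun a => robinSol α ((Set.Icc (a - l) (a + l)).indicator (fun _ => (1:ℝ))) x0) :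
    StrictMonoOn F (Set.Icc (-π + l) am) ∧
    StrictAntiOn F (Set.Icc am (π - l)) ∧
    (∀ a ∈ Set.Icc (-π + l) (π - l), F (-π + l) ≤ F a) ∧
    (F (-π + l) =
      if -π + 2 * l < x0 then
        l * (((π - l) * cA α - 1) * x0 + 1 / cA α + l - π)
      else
        -x0^2/2 - (π - l) * (1 - l * cA α) * x0 - l^2 + l * (1 / cA α + π) - π^2/2) ∧
    (∀ a ∈ Set.Icc (-π + l) (π - l), F a ≤ F am) ∧
    F am = (l / cA α) * (1 - l * cA α / 2) * (1 - x0^2 * (cA α)^2) := by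
  obtain ⟨hx0l, hx0r⟩ := hx0
  obtain ⟨hl0, hlπ⟩ := hl
  have hπ := pi_pos
  have hc : 0 < cA α := div_pos hα (by positivity)
  have hc1 : cA α * π < 1 := by
    unfold cA; rw [div_mul_eq_mul_div, div_lt_one (by positivity)]; linarith
  have hcx0 : cA α * x0 < 1 := by nlinarith [mul_le_mul_of_nonneg_left hx0r hc.le]
  have hcl : cA α * l < 1 := by nlinarith [mul_le_mul_of_nonneg_left hlπ.le hc.le]
  have hcpl : cA α * (π - l) < 1 := by nlinarith [mul_le_mul_of_nonneg_left (show π - l ≤ π by linarith) hc.le]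
  have key : ∀ a : ℝ, -π + l ≤ a → a ≤ π - l →
      F a = -(cA α * x0 * l * a) - 1/4*((a+l-x0)*|a+l-x0|) + 1/4*((a-l-x0)*|a-l-x0|) + l / cA α := by
    intro a h1 h2
    rw [hF]
    exact robinSol_indicator α x0 l a hα (by linarith) (by linarith) hl0
  have ham1 : -π + l ≤ am := by nlinarith [mul_nonneg hx0l (sub_pos.2 (show l * cA α < 1 by linarith [hcl]; )).le]
  have ham2 : am ≤ π - l := le_of_lt (ham ▸ hcond)
  have hamx : am ≤ x0 := by nlinarith [mul_nonneg hx0l (mul_nonneg hl0.le hc.le)]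
  have hamlx : -l < am - x0 := by nlinarith [mul_pos hl0 (sub_pos.2 hcx0)]
  -- strict monotone part
  have hmono : StrictMonoOn F (Set.Icc (-π + l) am) := by
    intro a ha b hb hab
    rw [key a ha.1 (by linarith [hb.2]), key b hb.1 (by linarith [hb.2])]
    have hax : a - l - x0 ≤ 0 := by linarith [ha.2]
    have hbx : b - l - x0 ≤ 0 := by linarith [hb.2]
    rw [abs_of_nonpos hax, abs_of_nonpos hbx]
    have hbam : b ≤ am := hb.2
    rcases le_or_gt (a + l) x0 with h1 | h1 <;> rcases le_or_gt (b + l) x0 with h2 | h2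
    · rw [abs_of_nonpos (show a + l - x0 ≤ 0 by linarith), abs_of_nonpos (show b + l - x0 ≤ 0 by linarith)]
      nlinarith [mul_pos (mul_pos hl0 (sub_pos.2 hcx0)) (sub_pos.2 hab)]
    · rw [abs_of_nonpos (show a + l - x0 ≤ 0 by linarith), abs_of_pos (show 0 < b + l - x0 by linarith)]
      have c1 : (0:ℝ) ≤ (b - a) * (-(cA α * x0 * l) - (b - x0)) :=
        mul_nonneg (by linarith) (by nlinarith)
      have c2 : (0:ℝ) ≤ (x0 - l - a) * (b + l - x0) :=
        mul_nonneg (by linarith) (by linarith)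
      have c3 : (0:ℝ) < (b + l - x0) * (b + l - x0) := mul_pos (by linarith) (by linarith)
      nlinarith [c1, c2, c3]
    · linarith
    · rw [abs_of_pos (show 0 < a + l - x0 by linarith), abs_of_pos (show 0 < b + l - x0 by linarith)]
      have c1 : (0:ℝ) < (b - a) * (-(2*(cA α*x0*l)) - (a - x0) - (b - x0)) :=
        mul_pos (by linarith) (by nlinarith)
      nlinarith [c1]
  -- strict antitone part
  have hanti : StrictAntiOn F (Set.Icc am (π - l)) := by
    intro a ha b hb hab
    rw [key a (by linarith [ha.1]) ha.2, key b (by linarith [hb.1]) hb.2]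
    have hax : 0 < a + l - x0 := by nlinarith [ha.1]
    have hbx : 0 < b + l - x0 := by linarith
    rw [abs_of_pos hax, abs_of_pos hbx]
    rcases le_or_gt x0 (a - l) with h1 | h1 <;> rcases le_or_gt x0 (b - l) with h2 | h2
    · rw [abs_of_nonneg (show (0:ℝ) ≤ a - l - x0 by linarith), abs_of_nonneg (show (0:ℝ) ≤ b - l - x0 by linarith)]
      nlinarith [mul_pos (mul_pos hl0 (by nlinarith : (0:ℝ) < cA α * x0 + 1)) (sub_pos.2 hab)]
    · linarith
    · rw [abs_of_neg (show a - l - x0 < 0 by linarith), abs_of_nonneg (show (0:ℝ) ≤ b - l - x0 by linarith)]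
      have c1 : (0:ℝ) < (l - (a - x0)) * (l + (a - x0)) :=
        mul_pos (by linarith) (by nlinarith [ha.1])
      have c2 : (0:ℝ) ≤ l * (b - l - x0) := mul_nonneg hl0.le (by linarith)
      have c3 : (0:ℝ) ≤ (cA α * x0 * l) * (b - a) :=
        mul_nonneg (mul_nonneg (mul_nonneg hc.le hx0l) hl0.le) (by linarith)
      nlinarith [c1, c2, c3]
    · rw [abs_of_neg (show a - l - x0 < 0 by linarith), abs_of_neg (show b - l - x0 < 0 by linarith)]
      have c1 : (0:ℝ) < (b - a) * ((a - x0) + (b - x0) + 2*(cA α*x0*l)) :=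
        mul_pos (by linarith) (by nlinarith [ha.1])
      nlinarith [c1]
  -- endpoint comparison
  have hABle : F (-π + l) ≤ F (π - l) := by
    rw [key (-π+l) (le_refl _) (by linarith), key (π-l) (by linarith) (le_refl _)]
    rw [abs_of_nonpos (show (-π+l) - l - x0 ≤ 0 by linarith),
      abs_of_nonneg (show (0:ℝ) ≤ (π-l) + l - x0 by linarith)]
    rcases le_or_gt ((-π+l) + l - x0) 0 with hp | hp <;>
      rcases le_or_gt ((π-l) - l - x0) 0 with hq | hq
    · rw [abs_of_nonpos hp, abs_of_nonpos hq]
      rcases le_or_gt (2*l) π with hll | hll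
      · nlinarith [mul_nonneg (mul_nonneg (show (0:ℝ) ≤ π - x0 by linarith)
            (show (0:ℝ) ≤ π - 2*l by linarith)) (show (0:ℝ) ≤ 1 - cA α*(π-l) by linarith),
          mul_nonneg (mul_nonneg (show (0:ℝ) ≤ x0 - π + 2*l by linarith)
            (show (0:ℝ) ≤ π - l by linarith)) (show (0:ℝ) ≤ 1 - cA α*π by linarith),
          mul_nonneg (show (0:ℝ) ≤ x0 - π + 2*l by linarith) (show (0:ℝ) ≤ π - x0 by linarith)]
      · nlinarith [mul_nonneg (mul_nonneg (show (0:ℝ) ≤ π - x0 by linarith)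
            (show (0:ℝ) ≤ 2*l - π by linarith)) (show (0:ℝ) ≤ 1 - cA α*l by linarith),
          mul_nonneg (mul_nonneg (show (0:ℝ) ≤ x0 - 2*l + π by linarith) hl0.le)
            (show (0:ℝ) ≤ 1 - cA α*π by linarith),
          mul_nonneg (show (0:ℝ) ≤ x0 - 2*l + π by linarith) (show (0:ℝ) ≤ π - x0 by linarith)]
    · rw [abs_of_nonpos hp, abs_of_pos hq]
      nlinarith [mul_nonneg (mul_nonneg hl0.le hx0l) (show (0:ℝ) ≤ 1 - cA α*(π-l) by linarith)]
    · rw [abs_of_pos hp, abs_of_nonpos hq]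
      nlinarith [mul_nonneg (mul_nonneg hx0l (show (0:ℝ) ≤ π - l by linarith))
        (show (0:ℝ) ≤ 1 - cA α*l by linarith)]
    · rw [abs_of_pos hp, abs_of_pos hq]
      nlinarith [mul_nonneg hx0l (show (0:ℝ) ≤ π - 2*cA α*l*(π-l) by nlinarith),
        sq_nonneg x0, sq_nonneg (π - 2*l)]
  refine ⟨hmono, hanti, ?_, ?_, ?_, ?_⟩
  · intro a ha
    rcases le_total a am with h | h
    · exact hmono.monotoneOn ⟨le_refl _, ham1⟩ ⟨ha.1, h⟩ ha.1
    · exact le_trans hABle (hanti.antitoneOn ⟨h, ha.2⟩ ⟨ham2, le_refl _⟩ ha.2)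
  · rw [key (-π+l) (le_refl _) (by linarith)]
    rw [abs_of_nonpos (show (-π+l) - l - x0 ≤ 0 by linarith)]
    split_ifs with h
    · rw [abs_of_neg (show (-π+l) + l - x0 < 0 by linarith)]
      field_simp
      ring
    · rw [abs_of_nonneg (show (0:ℝ) ≤ (-π+l) + l - x0 by linarith)]
      field_simp
      ring
  · intro a ha
    rcases le_total a am with h | h
    · exact hmono.monotoneOn ⟨ha.1, h⟩ ⟨ham1, le_refl _⟩ h
    · exact hanti.antitoneOn ⟨le_refl _, ham2⟩ ⟨h, ha.2⟩ h
  · rw [key am ham1 ham2]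
    rw [abs_of_nonneg (show (0:ℝ) ≤ am + l - x0 by linarith),
      abs_of_nonpos (show am - l - x0 ≤ 0 by linarith)]
    rw [ham]
    field_simp
    ring
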